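/- Suppose U ⊆ V has a δ-matching M in a bipartite graph with uniform variable degree d_v, and δ > 1 − 1/(4W + 2) for some W ≥ 1/2. Suppose the modified LLRs satisfy λ'ᵢ ≥ −W for all i, λ'ᵢ ≥ 1/2 for all i ∉ U. Then there exists a feasible edge weight assignment, i.e., weights τ_{ij} on edges such that (i) for each check j and distinct neighbors i, i' of j, τ_{ij} + τ_{i'j} ≥ 0, and (ii) for each variable node i, Σ_{j ∈ N(i)} τ_{ij} < λ'ᵢ. -/

import Mathlib

theorem delta_matching_gives_feasible_weights
    (n m : ℕ) (Adj : Fin n → Fin m → Prop)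
    (dv : ℕ) (hdv : 1 ≤ dv)
    (hdeg : ∀ i : Fin n, Set.ncard {j | Adj i j} = dv)
    (W δ : ℝ) (hW : 1 / 2 ≤ W) (hδ : δ > 1 - 1 / (4 * W + 2))
    (U : Set (Fin n))
    (Udot : Set (Fin n))
    (hUdot : Udot = {i | i ∉ U ∧
      (1 - (2 * δ - 1)) * (dv : ℝ) < (Set.ncard ({j | Adj i j} ∩ {j | ∃ u ∈ U, Adj u j}) : ℝ)})
    (M : Set (Fin n × Fin m))
    (hMedges : ∀ e ∈ M, Adj e.1 e.2 ∧ e.1 ∈ U ∪ Udot)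
    (hMcheck : ∀ j : Fin m, Set.ncard {i | (i, j) ∈ M} ≤ 1)
    (hMU : ∀ i ∈ U, δ * (dv : ℝ) ≤ (Set.ncard {j | (i, j) ∈ M} : ℝ))
    (hMUdot : ∀ i ∈ Udot, (2 * δ - 1) * (dv : ℝ) ≤ (Set.ncard {j | (i, j) ∈ M} : ℝ))
    (lam' : Fin n → ℝ)
    (hlamW : ∀ i, -W ≤ lam' i)
    (hlamU : ∀ i, i ∉ U → 1 / 2 ≤ lam' i) :
    ∃ τ : Fin n → Fin m → ℝ,
      (∀ (j : Fin m) (i i' : Fin n), i ≠ i' → Adj i j → Adj i' j → 0 ≤ τ i j + τ i' j) ∧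
      (∀ i : Fin n, ∑ᶠ j ∈ {j : Fin m | Adj i j}, τ i j < lam' i) := by
  classical
  have hdvR : (0:ℝ) < dv := by exact_mod_cast hdv
  have h42 : (0:ℝ) < 4*W+2 := by linarith
  have hkey : 4*W+1 < δ*(4*W+2) := by
    have h := mul_lt_mul_of_pos_right hδ h42
    rw [sub_mul, one_mul, div_mul_cancel₀ _ (ne_of_gt h42)] at h
    linarith
  set γ : ℝ := (2*W+1)/(2*dv) with hγdef
  have hγpos : 0 < γ := by
    apply div_pos <;> linarith
  have hγdv : γ * dv = (2*W+1)/2 := by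
    rw [hγdef, div_mul_eq_mul_div, div_eq_div_iff (ne_of_gt (by linarith)) (by norm_num)]
    ring
  have h1 : γ * dv * (1-2*δ) < -W := by rw [hγdv]; nlinarith
  have h2 : γ * dv * (2-2*δ) < 1/2 := by rw [hγdv]; nlinarith
  have hunique : ∀ (j : Fin m) (a b : Fin n), a ≠ b → (a,j) ∈ M → (b,j) ∈ M → False := by
    intro j a b hab ha hb
    have hsub : ({a, b} : Set (Fin n)) ⊆ {k | (k,j) ∈ M} := by
      intro k hk
      rcases hk with rfl | hk
      · exact ha
      · rcases hk; exact hb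
    have h2' : 2 ≤ Set.ncard {k | (k,j) ∈ M} := by
      have := Set.ncard_le_ncard hsub (Set.toFinite _)
      rwa [Set.ncard_pair hab] at this
    have := hMcheck j
    omega
  refine ⟨fun i j => if (i,j) ∈ M ∧ i ∈ U then -γ else if ∃ u ∈ U, (u,j) ∈ M then γ else 0,
    ?_, ?_⟩
  · intro j i i' hne hA hA'
    beta_reduce
    by_cases hm : (i,j) ∈ M ∧ i ∈ U
    · by_cases hm' : (i',j) ∈ M ∧ i' ∈ U
      · exact absurd hm'.1 (fun h => hunique j i i' hne hm.1 h)
      · rw [if_pos hm, if_neg hm', if_pos ⟨i, hm.2, hm.1⟩]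
        linarith
    · by_cases hm' : (i',j) ∈ M ∧ i' ∈ U
      · rw [if_pos hm', if_neg hm, if_pos ⟨i', hm'.2, hm'.1⟩]
        linarith
      · rw [if_neg hm, if_neg hm']
        split_ifs <;> linarith
  · intro i
    beta_reduce
    have hF : {j : Fin m | Adj i j}.Finite := Set.toFinite _
    rw [← Set.Finite.coe_toFinset hF, finsum_mem_coe_finset]
    set F := hF.toFinset with hFdef
    have hFcard : (F.card : ℝ) = dv := by
      rw [← Set.ncard_eq_toFinset_card _ hF, hdeg i]
    by_cases hU : i ∈ U
    · -- i ∈ U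
      have hMfin : {j : Fin m | (i,j) ∈ M}.Finite := Set.toFinite _
      set Mf := hMfin.toFinset with hMfdef
      have hsub : Mf ⊆ F := by
        intro j hj
        rw [Set.Finite.mem_toFinset] at hj ⊢
        exact (hMedges (i,j) hj).1
      have hc : δ * dv ≤ (Mf.card : ℝ) := by
        rw [← Set.ncard_eq_toFinset_card _ hMfin]
        exact hMU i hU
      have hcle : Mf.card ≤ F.card := Finset.card_le_card hsub
      have hsplit := Finset.sum_sdiff (f := fun j => if (i,j) ∈ M ∧ i ∈ U then -γ else if ∃ u ∈ U, (u,j) ∈ M then γ else 0) hsub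
      have hs1 : ∑ j ∈ Mf, (if (i,j) ∈ M ∧ i ∈ U then -γ else if ∃ u ∈ U, (u,j) ∈ M then γ else 0) = -γ * Mf.card := by
        rw [Finset.sum_congr rfl (fun j hj => if_pos ⟨hMfin.mem_toFinset.mp hj, hU⟩),
          Finset.sum_const, nsmul_eq_mul, mul_comm]
      have hs2 : ∑ j ∈ F \ Mf, (if (i,j) ∈ M ∧ i ∈ U then -γ else if ∃ u ∈ U, (u,j) ∈ M then γ else 0) ≤ γ * (F \ Mf).card := by
        rw [mul_comm]
        refine le_trans (Finset.sum_le_card_nsmul _ _ γ (fun j hj => ?_)) (by rw [nsmul_eq_mul])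
        split_ifs <;> linarith
      have hcsd : ((F \ Mf).card : ℝ) = (dv : ℝ) - Mf.card := by
        rw [Finset.card_sdiff_of_subset hsub, Nat.cast_sub hcle, hFcard]
      calc ∑ j ∈ F, (if (i,j) ∈ M ∧ i ∈ U then -γ else if ∃ u ∈ U, (u,j) ∈ M then γ else 0)
          = _ + _ := hsplit.symm
        _ ≤ γ * (F \ Mf).card + (-γ * Mf.card) := by rw [hs1]; linarith
        _ = γ * ((dv:ℝ) - 2 * Mf.card) := by rw [hcsd]; ring
        _ ≤ γ * dv * (1 - 2*δ) := by nlinarith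
        _ < -W := h1
        _ ≤ lam' i := hlamW i
    · -- i ∉ U
      set Bf := F.filter (fun j => ∃ u ∈ U, (u,j) ∈ M) with hBfdef
      have hBsub : Bf ⊆ F := Finset.filter_subset _ _
      have hsum : ∑ j ∈ F, (if (i,j) ∈ M ∧ i ∈ U then -γ else if ∃ u ∈ U, (u,j) ∈ M then γ else 0) = γ * Bf.card := by
        rw [← Finset.sum_sdiff hBsub]
        have e1 : ∑ j ∈ F \ Bf, (if (i,j) ∈ M ∧ i ∈ U then -γ else if ∃ u ∈ U, (u,j) ∈ M then γ else 0) = 0 := by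
          refine Finset.sum_eq_zero (fun j hj => ?_)
          rw [Finset.mem_sdiff] at hj
          rw [if_neg (fun h => hU h.2), if_neg (fun h => hj.2 (Finset.mem_filter.mpr ⟨hj.1, h⟩))]
        have e2 : ∑ j ∈ Bf, (if (i,j) ∈ M ∧ i ∈ U then -γ else if ∃ u ∈ U, (u,j) ∈ M then γ else 0) = γ * Bf.card := by
          rw [Finset.sum_congr rfl (fun j hj => ?_), Finset.sum_const, nsmul_eq_mul, mul_comm]
          rw [if_neg (fun h => hU h.2), if_pos (Finset.mem_filter.mp hj).2]
        rw [e1, e2, zero_add]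
      have hBcard : (Bf.card : ℝ) ≤ (2 - 2*δ) * dv := by
        by_cases hUd : i ∈ Udot
        · -- use the matching of Udot nodes
          have hMfin : {j : Fin m | (i,j) ∈ M}.Finite := Set.toFinite _
          set Mf := hMfin.toFinset with hMfdef
          have hsub : Mf ⊆ F := by
            intro j hj
            rw [Set.Finite.mem_toFinset] at hj ⊢
            exact (hMedges (i,j) hj).1
          have hc : (2*δ-1) * dv ≤ (Mf.card : ℝ) := by
            rw [← Set.ncard_eq_toFinset_card _ hMfin]
            exact hMUdot i hUd
          have hBsub2 : Bf ⊆ F \ Mf := by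
            intro j hj
            rw [Finset.mem_sdiff]
            obtain ⟨hjF, u, huU, huM⟩ := Finset.mem_filter.mp hj
            refine ⟨hjF, fun hjM => ?_⟩
            rw [Set.Finite.mem_toFinset] at hjM
            exact hunique j i u (fun h => hU (h ▸ huU)) hjM huM
          have hcle : Mf.card ≤ F.card := Finset.card_le_card hsub
          have := Finset.card_le_card hBsub2
          have hcsd : ((F \ Mf).card : ℝ) = (dv : ℝ) - Mf.card := by
            rw [Finset.card_sdiff_of_subset hsub, Nat.cast_sub hcle, hFcard]
          have : (Bf.card : ℝ) ≤ ((F \ Mf).card : ℝ) := by exact_mod_cast this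
          linarith
        · -- i is not in Udot : few neighbors in N(U)
          rw [hUdot] at hUd
          simp only [Set.mem_setOf_eq, not_and, not_lt] at hUd
          have hle := hUd hU
          have hBsub2 : (Bf : Set (Fin m)) ⊆ {j | Adj i j} ∩ {j | ∃ u ∈ U, Adj u j} := by
            intro j hj
            obtain ⟨hjF, u, huU, huM⟩ := Finset.mem_filter.mp hj
            exact ⟨hF.mem_toFinset.mp hjF, u, huU, (hMedges (u,j) huM).1⟩
          have hcard : (Bf.card : ℝ) ≤ (Set.ncard ({j | Adj i j} ∩ {j | ∃ u ∈ U, Adj u j}) : ℝ) := by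
            have := Set.ncard_le_ncard hBsub2 (Set.toFinite _)
            rw [Set.ncard_coe_finset] at this
            exact_mod_cast this
          have : (1 - (2*δ - 1)) * (dv:ℝ) = (2 - 2*δ)*dv := by ring
          linarith
      calc ∑ j ∈ F, (if (i,j) ∈ M ∧ i ∈ U then -γ else if ∃ u ∈ U, (u,j) ∈ M then γ else 0)
          = γ * Bf.card := hsum
        _ ≤ γ * dv * (2 - 2*δ) := by nlinarith
        _ < 1/2 := h2
        _ ≤ lam' i := hlamU i hU
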